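/- arXiv:2108.11157 — 2 statements merged into one kernel-verified Lean document; each statement's English description precedes it below -/
import Mathlib

section
/- Let P be a finite set partitioned into H and M, let V be a type of values, and let f : H → V assign to each honest player the unique value it signed. Assume |H| + 2·|M| < 2·t. Then there do not exist subsets A, A' ⊆ P and values b, b' ∈ V with b ≠ b' such that A ∩ H ⊆ f⁻¹({b}), A' ∩ H ⊆ f⁻¹({b'}), |A| ≥ t and |A'| ≥ t. (In other words, no two players of a step can each collect at least t valid messages advertising two distinct values in the same component.) -/
/-- No two players can each collect at least `t` valid messages advertising two
distinct values in the same component, assuming `|H| + 2|M| < 2t`, where each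
honest player signs exactly one value (given by `f`). -/
theorem no_two_quorums_for_distinct_values
    {α V : Type*} [DecidableEq α]
    (P H M : Finset α) (hPart : P = H ∪ M) (hdisj : Disjoint H M)
    (f : α → V) (t : ℕ)
    (hcard : H.card + 2 * M.card < 2 * t) :
    ¬ ∃ (A A' : Finset α) (b b' : V),
        A ⊆ P ∧ A' ⊆ P ∧ b ≠ b' ∧
        (∀ x ∈ A ∩ H, f x = b) ∧ (∀ x ∈ A' ∩ H, f x = b') ∧
        t ≤ A.card ∧ t ≤ A'.card := by
  rintro ⟨A, A', b, b', hA, hA', hbb, hfb, hfb', htA, htA'⟩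
  have hdisjAH : Disjoint (A ∩ H) (A' ∩ H) := by
    rw [Finset.disjoint_left]
    intro x hx hx'
    exact hbb ((hfb x hx) ▸ (hfb' x hx'))
  have hsum : (A ∩ H).card + (A' ∩ H).card ≤ H.card := by
    calc (A ∩ H).card + (A' ∩ H).card = ((A ∩ H) ∪ (A' ∩ H)).card := by
          rw [Finset.card_union_of_disjoint hdisjAH]
      _ ≤ H.card := Finset.card_le_card (by
          intro x hx
          rcases Finset.mem_union.mp hx with h | h <;>
            exact (Finset.mem_inter.mp h).2)
  have key : ∀ B : Finset α, B ⊆ P → B.card ≤ (B ∩ H).card + M.card := by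
    intro B hB
    have : B ⊆ (B ∩ H) ∪ M := by
      intro x hx
      rcases Finset.mem_union.mp (hPart ▸ hB hx) with h | h
      · exact Finset.mem_union.mpr (Or.inl (Finset.mem_inter.mpr ⟨hx, h⟩))
      · exact Finset.mem_union.mpr (Or.inr h)
    exact le_trans (Finset.card_le_card this) (Finset.card_union_le _ _)
  have h1 := key A hA
  have h2 := key A' hA'
  omega
end

section
/- Let λ, Λ, Ω be nonnegative real numbers and let t : ℕ → ℝ satisfy t(1) = Ω, t(2) = t(1) + Λ + λ, t(3) = t(2) + Λ + λ, and t(s) = t(s−1) + 2λ for all s ≥ 4. Let α_i, α_j ∈ [0, λ]. Then: (a) for s ∈ {2, 3} and any 1 ≤ s' < s, α_j + t(s') + Λ ≤ α_i + t(s); (b) for any s ≥ 4 and any 1 ≤ s' < s, α_j + t(s') + λ ≤ α_i + t(s). (Consequently, a user ending step s at time α_i + t(s) has received every message sent by an honest player of an earlier step s' at time α_j + t(s'), since messages of steps 1–2 propagate within time Λ and later messages within time λ.) -/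
/-- A user ending step `s` at time `αᵢ + t s` has received every message sent
by an honest player of an earlier step `s'` at time `αⱼ + t s'`:
(a) for `s ∈ {2, 3}`, messages propagate within time `Λ`;
(b) for `s ≥ 4`, messages propagate within time `λ`. -/
theorem step_messages_received_in_time
    (lam Lam Om : ℝ) (hlam : 0 ≤ lam) (hLam : 0 ≤ Lam) (hOm : 0 ≤ Om)
    (t : ℕ → ℝ)
    (ht1 : t 1 = Om) (ht2 : t 2 = t 1 + Lam + lam) (ht3 : t 3 = t 2 + Lam + lam)
    (hts : ∀ s : ℕ, 4 ≤ s → t s = t (s - 1) + 2 * lam)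
    (αi αj : ℝ) (hαi : αi ∈ Set.Icc 0 lam) (hαj : αj ∈ Set.Icc 0 lam) :
    (∀ s : ℕ, (s = 2 ∨ s = 3) → ∀ s' : ℕ, 1 ≤ s' → s' < s →
        αj + t s' + Lam ≤ αi + t s) ∧
    (∀ s : ℕ, 4 ≤ s → ∀ s' : ℕ, 1 ≤ s' → s' < s →
        αj + t s' + lam ≤ αi + t s) := by
  obtain ⟨hi0, hi1⟩ := hαi
  obtain ⟨hj0, hj1⟩ := hαj
  have hstep : ∀ n : ℕ, 1 ≤ n → t n ≤ t (n + 1) := by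
    intro n hn
    rcases Nat.lt_or_ge n 3 with h | h
    · interval_cases n
      · rw [ht2]; linarith
      · rw [ht3]; linarith
    · have := hts (n + 1) (by omega)
      simp only [Nat.add_sub_cancel] at this
      rw [this]; linarith
  have hmono : ∀ a b : ℕ, 1 ≤ a → a ≤ b → t a ≤ t b := by
    intro a b ha hab
    induction b with
    | zero => omega
    | succ n ih =>
      rcases Nat.lt_or_ge a (n + 1) with h | h
      · exact le_trans (ih (by omega)) (hstep n (by omega))
      · have : a = n + 1 := by omega
        rw [this]
  constructor
  · rintro s (rfl | rfl) s' h1 h2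
    · have : s' = 1 := by omega
      subst this
      rw [ht2]; linarith
    · interval_cases s'
      · rw [ht3, ht2]; linarith
      · rw [ht3]; linarith
  · intro s hs s' h1 h2
    have h3 : t (s - 1) ≥ t s' := hmono s' (s - 1) h1 (by omega)
    have := hts s hs
    rw [this]
    linarith
end
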